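/- Let G be a finite index set, let a_u (u ∈ G) be nonzero vectors in ℂ^d, and let T = Σ_{j=1}^{t} w_j R_j, where w_1,…,w_t > 0 with Σ_{j=1}^{t} w_j = 1 and each R_j is a finite composition of relaxed projections P_{a_u}^{ω_u} with indices u ∈ G and real relaxation parameters ω_u. Assume there exists α < 1 such that ‖T x‖ ≤ α‖x‖ for every x ∈ span{a_u : u ∈ G}. Then for every sequence (x_k) in ℂ^d with ‖x_k‖ ≤ 1 for all k and ‖T x_k‖ → 1, it follows that (I − T) x_k → 0. -/

import Mathlib

/-- The relaxed projection `P_a^ω x = x - ω (⟨x,a⟩/‖a‖²) a` associated to a vector `a ∈ ℂ^d`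
and a real relaxation parameter `ω`.  (Here `⟨x,a⟩` is linear in `x`, i.e. `inner a x` in
Mathlib's convention.) -/
noncomputable def relaxProj {d : ℕ} (a : EuclideanSpace ℂ (Fin d)) (ω : ℝ)
    (x : EuclideanSpace ℂ (Fin d)) : EuclideanSpace ℂ (Fin d) :=
  x - ((ω : ℂ) * ((inner ℂ a x : ℂ) / (‖a‖ : ℂ) ^ 2)) • a

lemma relaxProj_add {d : ℕ} (a : EuclideanSpace ℂ (Fin d)) (ω : ℝ)
    (p q : EuclideanSpace ℂ (Fin d)) :
    relaxProj a ω (p + q) = relaxProj a ω p + relaxProj a ω q := by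
  simp only [relaxProj, inner_add_right, add_div, mul_add, add_smul]
  abel

lemma relaxProj_fixed {d : ℕ} (a : EuclideanSpace ℂ (Fin d)) (ω : ℝ)
    (q : EuclideanSpace ℂ (Fin d)) (h : (inner ℂ a q : ℂ) = 0) :
    relaxProj a ω q = q := by
  simp [relaxProj, h]

/-- If `T = Σ_j w_j R_j` is a convex combination of finite compositions `R_j` of
relaxed projections `P_{a_u}^{ω_u}` with `u` in a finite index set `G`, and `‖T x‖ ≤ α ‖x‖` on
`span{a_u : u ∈ G}` for some `α < 1`, then for every sequence `(x_k)` with `‖x_k‖ ≤ 1` and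
`‖T x_k‖ → 1`, one has `(I - T) x_k → 0`. -/
theorem stmt_3 {d : ℕ} {G : Type*} [Fintype G]
    (a : G → EuclideanSpace ℂ (Fin d)) (ha : ∀ u, a u ≠ 0) (ω : G → ℝ)
    (t : ℕ) (w : Fin t → ℝ) (hw : ∀ j, 0 < w j) (hw1 : ∑ j, w j = 1)
    (L : Fin t → List G)
    (T : EuclideanSpace ℂ (Fin d) → EuclideanSpace ℂ (Fin d))
    (hT : ∀ x, T x = ∑ j, w j • ((L j).foldl (fun y u => relaxProj (a u) (ω u) y) x))
    (α : ℝ) (hα : α < 1)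
    (hcon : ∀ x ∈ Submodule.span ℂ (Set.range a), ‖T x‖ ≤ α * ‖x‖)
    (x : ℕ → EuclideanSpace ℂ (Fin d)) (hx : ∀ k, ‖x k‖ ≤ 1)
    (hlim : Filter.Tendsto (fun k => ‖T (x k)‖) Filter.atTop (nhds 1)) :
    Filter.Tendsto (fun k => x k - T (x k)) Filter.atTop (nhds 0) := by
  classical
  set S : Submodule ℂ (EuclideanSpace ℂ (Fin d)) := Submodule.span ℂ (Set.range a) with hSdef
  -- folding over a list, a vector in `Sᗮ` passes through untouched
  have hfold_add : ∀ (l : List G) (p q : EuclideanSpace ℂ (Fin d)), q ∈ Sᗮ →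
      l.foldl (fun y u => relaxProj (a u) (ω u) y) (p + q)
        = l.foldl (fun y u => relaxProj (a u) (ω u) y) p + q := by
    intro l
    induction l with
    | nil => intro p q hq; simp
    | cons u l ih =>
      intro p q hq
      have hau : a u ∈ S := Submodule.subset_span ⟨u, rfl⟩
      have h0 : (inner ℂ (a u) q : ℂ) = 0 :=
        (Submodule.mem_orthogonal S q).mp hq (a u) hau
      simp only [List.foldl_cons]
      rw [relaxProj_add, relaxProj_fixed _ _ _ h0]
      exact ih _ _ hq
  -- folding preserves `S`
  have hfold_mem : ∀ (l : List G) (p : EuclideanSpace ℂ (Fin d)), p ∈ S →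
      l.foldl (fun y u => relaxProj (a u) (ω u) y) p ∈ S := by
    intro l
    induction l with
    | nil => intro p hp; simpa using hp
    | cons u l ih =>
      intro p hp
      simp only [List.foldl_cons]
      refine ih _ ?_
      exact Submodule.sub_mem S hp
        (Submodule.smul_mem S _ (Submodule.subset_span ⟨u, rfl⟩))
  -- T decomposition
  have hTdecomp : ∀ (p q : EuclideanSpace ℂ (Fin d)), q ∈ Sᗮ → T (p + q) = T p + q := by
    intro p q hq
    rw [hT, hT]
    have h1 : ∀ j : Fin t, (L j).foldl (fun y u => relaxProj (a u) (ω u) y) (p + q)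
        = (L j).foldl (fun y u => relaxProj (a u) (ω u) y) p + q :=
      fun j => hfold_add (L j) p q hq
    simp only [h1, smul_add]
    rw [Finset.sum_add_distrib, ← Finset.sum_smul, hw1, one_smul]
  have hTmem : ∀ p ∈ S, T p ∈ S := by
    intro p hp
    rw [hT]
    exact Submodule.sum_mem S fun j _ =>
      Submodule.smul_of_tower_mem S _ (hfold_mem (L j) p hp)
  -- the modified contraction constant
  set β : ℝ := max α 0 with hβdef
  have hβ0 : 0 ≤ β := le_max_right _ _
  have hβ1 : β < 1 := max_lt hα one_pos
  have hconβ : ∀ y ∈ S, ‖T y‖ ≤ β * ‖y‖ := fun y hy =>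
    (hcon y hy).trans (mul_le_mul_of_nonneg_right (le_max_left _ _) (norm_nonneg _))
  -- pieces of x k
  set p : ℕ → EuclideanSpace ℂ (Fin d) := fun k => (S.orthogonalProjection (x k) : EuclideanSpace ℂ (Fin d)) with hpdef
  set q : ℕ → EuclideanSpace ℂ (Fin d) := fun k => x k - p k with hqdef
  have hqorth : ∀ k, q k ∈ Sᗮ := fun k => Submodule.sub_starProjection_mem_orthogonal (K := S) (x k)
  have hpmem : ∀ k, p k ∈ S := fun k => (S.orthogonalProjection (x k)).2
  have hxeq : ∀ k, x k = p k + q k := fun k => by simp [hqdef]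
  have hTx : ∀ k, T (x k) = T (p k) + q k := by
    intro k
    conv_lhs => rw [hxeq k]
    exact hTdecomp _ _ (hqorth k)
  -- Pythagoras
  have hpyth1 : ∀ k, ‖T (x k)‖ * ‖T (x k)‖ = ‖T (p k)‖ * ‖T (p k)‖ + ‖q k‖ * ‖q k‖ := by
    intro k
    rw [hTx k]
    exact norm_add_sq_eq_norm_sq_add_norm_sq_of_inner_eq_zero _ _
      ((Submodule.mem_orthogonal S (q k)).mp (hqorth k) _ (hTmem _ (hpmem k)))
  have hpyth2 : ∀ k, ‖x k‖ * ‖x k‖ = ‖p k‖ * ‖p k‖ + ‖q k‖ * ‖q k‖ := by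
    intro k
    conv_lhs => rw [hxeq k]
    exact norm_add_sq_eq_norm_sq_add_norm_sq_of_inner_eq_zero _ _
      ((Submodule.mem_orthogonal S (q k)).mp (hqorth k) _ (hpmem k))
  -- key inequality: (1 - β^2) ‖p k‖² ≤ 1 - ‖T x k‖²
  have hkey : ∀ k, (1 - β ^ 2) * (‖p k‖ * ‖p k‖) ≤ 1 - ‖T (x k)‖ * ‖T (x k)‖ := by
    intro k
    have h1 : ‖T (p k)‖ ≤ β * ‖p k‖ := hconβ _ (hpmem k)
    have h2 : ‖x k‖ * ‖x k‖ ≤ 1 :=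
      mul_le_one₀ (hx k) (norm_nonneg _) (hx k)
    have h3 := hpyth1 k
    have h4 := hpyth2 k
    have h5 : ‖T (p k)‖ * ‖T (p k)‖ ≤ (β * ‖p k‖) * (β * ‖p k‖) :=
      mul_self_le_mul_self (norm_nonneg _) h1
    nlinarith
  -- so ‖p k‖² → 0
  have hlim2 : Filter.Tendsto (fun k => 1 - ‖T (x k)‖ * ‖T (x k)‖)
      Filter.atTop (nhds 0) := by
    have := (hlim.mul hlim)
    have h := Filter.Tendsto.sub (tendsto_const_nhds (x := (1:ℝ))) this
    simpa using h
  have hc : (0:ℝ) < 1 - β ^ 2 := by nlinarith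
  have hpsq : Filter.Tendsto (fun k => ‖p k‖ * ‖p k‖) Filter.atTop (nhds 0) := by
    apply squeeze_zero (fun k => mul_self_nonneg _)
      (g := fun k => (1 - β ^ 2)⁻¹ * (1 - ‖T (x k)‖ * ‖T (x k)‖))
    · intro k
      exact (le_inv_mul_iff₀ hc).mpr (hkey k)
    · simpa using hlim2.const_mul (1 - β ^ 2)⁻¹
  have hpn : Filter.Tendsto (fun k => ‖p k‖) Filter.atTop (nhds 0) := by
    have h := hpsq.sqrt
    simp only [Real.sqrt_zero] at h
    have heq : (fun k => ‖p k‖) = fun k => Real.sqrt (‖p k‖ * ‖p k‖) :=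
      funext fun k => (Real.sqrt_mul_self (norm_nonneg _)).symm
    rw [heq]
    exact h
  -- conclude
  rw [show (0 : EuclideanSpace ℂ (Fin d)) = 0 from rfl]
  apply tendsto_zero_iff_norm_tendsto_zero.mpr
  have heq : ∀ k, x k - T (x k) = p k - T (p k) := by
    intro k
    rw [hTx k]
    conv_lhs => rw [hxeq k]
    abel
  apply squeeze_zero (fun k => norm_nonneg _) (g := fun k => (1 + β) * ‖p k‖)
  · intro k
    rw [heq k]
    calc ‖p k - T (p k)‖ ≤ ‖p k‖ + ‖T (p k)‖ := norm_sub_le _ _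
      _ ≤ ‖p k‖ + β * ‖p k‖ := by linarith [hconβ _ (hpmem k)]
      _ = (1 + β) * ‖p k‖ := by ring
  · simpa using hpn.const_mul (1 + β)
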